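/- In the Mathieu group M₁₁, let σ₀ = (1 5 8 4 6 9)(2 10 3)(7 11) (an element of order 6) and σ₁ = (1 6 8)(2 5 3 4 10 9)(7 11). Then σ₁ lies in the conjugacy class of σ₀, and setting σ₂ = σ₀ σ₁ σ₀⁻¹, the triple (σ₀, σ₁, σ₂) consists of distinct elements forming a family of type D₃ (σ_i σ_j σ_i⁻¹ = σ_{2i−j} for all i,j ∈ ℤ₃). -/
import Mathlib

set_option maxRecDepth 10000
def M11 : Subgroup (Equiv.Perm (Fin 11)) :=
  Subgroup.closure {c[0, 1, 2, 3, 4, 5, 6, 7, 8, 9, 10], c[2, 6, 10, 7] * c[3, 9, 4, 5]}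

def sigma0 : Equiv.Perm (Fin 11) := c[0, 4, 7, 3, 5, 8] * c[1, 9, 2] * c[6, 10]

def sigma1 : Equiv.Perm (Fin 11) := c[0, 5, 7] * c[1, 4, 2, 3, 9, 8] * c[6, 10]

def sigma2 : Equiv.Perm (Fin 11) := sigma0 * sigma1 * sigma0⁻¹

def sigmaFam : ZMod 3 → Equiv.Perm (Fin 11) :=
  fun i => if i = 0 then sigma0 else if i = 1 then sigma1 else sigma2

private def aa : Equiv.Perm (Fin 11) := c[0, 1, 2, 3, 4, 5, 6, 7, 8, 9, 10]
private def bb : Equiv.Perm (Fin 11) := c[2, 6, 10, 7] * c[3, 9, 4, 5]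

private lemma ha : aa ∈ M11 := Subgroup.subset_closure (Set.mem_insert _ _)
private lemma hb : bb ∈ M11 := Subgroup.subset_closure (Set.mem_insert_of_mem _ rfl)

private lemma hs0 : sigma0 = bb*bb*aa*bb*aa*bb*aa*bb*bb*bb*aa := by decide

/-- `σ₀` has order 6, `σ₁` is conjugate to `σ₀` in `M₁₁`, and `(σ₀, σ₁, σ₂)` are distinct
and form a family of type `D₃`. -/
theorem stmt15 :
    sigma0 ∈ M11 ∧ orderOf sigma0 = 6 ∧
    (∃ g ∈ M11, g * sigma0 * g⁻¹ = sigma1) ∧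
    Function.Injective sigmaFam ∧
    (∀ i j : ZMod 3, sigmaFam i * sigmaFam j * (sigmaFam i)⁻¹ = sigmaFam (2 * i - j)) := by
  refine ⟨?_, ?_, ⟨aa*aa*aa*aa*bb*bb*bb, ?_, ?_⟩, ?_, ?_⟩
  · rw [hs0]
    exact mul_mem (mul_mem (mul_mem (mul_mem (mul_mem (mul_mem (mul_mem (mul_mem (mul_mem
      (mul_mem hb hb) ha) hb) ha) hb) ha) hb) hb) hb) ha
  · rw [orderOf_eq_iff (by norm_num)]
    constructor
    · decide
    · decide
  · exact mul_mem (mul_mem (mul_mem (mul_mem (mul_mem (mul_mem ha ha) ha) ha) hb) hb) hb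
  · decide
  · decide
  · decide
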